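/- arXiv:0709.1570 — 7 statements merged into one kernel-verified Lean document; each statement's English description precedes it below -/
import Mathlib

section
/- For n > 1, if n - φ(n) is even, then the middle coefficient of Ψ_n(x) vanishes: c_n((n - φ(n))/2) = 0. -/
open Polynomial

/-- Reflect of a product over a finset. -/
lemma reflect_prod_one {R : Type*} [CommRing R] (s : Finset R) :
    reflect s.card (∏ z ∈ s, (X - C z)) = ∏ z ∈ s, reflect 1 (X - C z) := by
  classical
  induction s using Finset.induction_on with
  | empty => simp [reflect_one]
  | insert a s hz ih =>
    rw [Finset.prod_insert hz, Finset.prod_insert hz, Finset.card_insert_of_notMem hz,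
      add_comm, ← ih]
    rw [reflect_mul (X - C a) _ (by simpa using natDegree_X_sub_C_le a)
      (le_trans (natDegree_prod_le _ _) (by simpa using Finset.sum_le_card_nsmul s _ 1 (fun z _ => natDegree_X_sub_C_le z)))]

lemma cyclotomic_reflect (n : ℕ) (hn : 1 < n) :
    reflect (Nat.totient n) (cyclotomic n ℤ) = cyclotomic n ℤ := by
  have h0 : (0 : ℕ) < n := by omega
  apply map_injective (Int.castRingHom ℂ) (fun a b h => Int.cast_injective (α := ℂ) (by simpa using h))
  rw [← reflect_map, map_cyclotomic]
  obtain hζ := Complex.isPrimitiveRoot_exp n h0.ne'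
  rw [cyclotomic_eq_prod_X_sub_primitiveRoots hζ, ← Complex.card_primitiveRoots n,
    reflect_prod_one]
  have hmem : ∀ z ∈ primitiveRoots n ℂ, IsPrimitiveRoot z n := fun z hz =>
    (mem_primitiveRoots h0).mp hz
  have step1 : ∀ z ∈ primitiveRoots n ℂ,
      reflect 1 (X - C z) = (-C z) * (X - C z⁻¹) := by
    intro z hz
    have hz0 : z ≠ 0 := (hmem z hz).ne_zero h0.ne'
    have hXz : (X : ℂ[X]) - C z = X + C (-z) := by rw [map_neg, sub_eq_add_neg]
    rw [hXz, reflect_add, reflect_one_X, reflect_C, map_neg]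
    have hC : C z * C z⁻¹ = (1 : ℂ[X]) := by rw [← C_mul, mul_inv_cancel₀ hz0, C_1]
    linear_combination -hC
  rw [Finset.prod_congr rfl step1, Finset.prod_mul_distrib]
  have hprod : (∏ z ∈ primitiveRoots n ℂ, (-C z) : ℂ[X]) = 1 := by
    have h1 : (cyclotomic n ℂ).coeff 0 = 1 := cyclotomic_coeff_zero ℂ hn
    rw [cyclotomic_eq_prod_X_sub_primitiveRoots hζ, coeff_zero_eq_eval_zero, eval_prod] at h1
    simp only [eval_sub, eval_X, eval_C, zero_sub] at h1
    calc (∏ z ∈ primitiveRoots n ℂ, (-C z) : ℂ[X])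
        = C (∏ z ∈ primitiveRoots n ℂ, (-z)) := by rw [map_prod]; simp
      _ = 1 := by rw [h1, map_one]
  rw [hprod, one_mul]
  -- product over inverses equals the product
  apply Finset.prod_nbij' (fun z => z⁻¹) (fun z => z⁻¹)
  · intro z hz; exact (mem_primitiveRoots h0).mpr ((hmem z hz).inv)
  · intro z hz; exact (mem_primitiveRoots h0).mpr ((hmem z hz).inv)
  · intro z hz; simp
  · intro z hz; simp
  · intro z hz; simp

/-- The reciprocal cyclotomic polynomial Ψₙ(x) = (xⁿ - 1)/Φₙ(x). -/
noncomputable def Psi (n : ℕ) : ℤ[X] := (X ^ n - 1) /ₘ cyclotomic n ℤ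

theorem psi_middle_coeff (n : ℕ) (hn : 1 < n) (h2 : 2 ∣ (n - Nat.totient n)) :
    (Psi n).coeff ((n - Nat.totient n) / 2) = 0 := by
  have h0 : (0 : ℕ) < n := by omega
  set N := n - Nat.totient n with hN
  have hmon := cyclotomic.monic n ℤ
  have hdvd := cyclotomic.dvd_X_pow_sub_one n ℤ
  have hmul : (X : ℤ[X]) ^ n - 1 = cyclotomic n ℤ * Psi n := by
    conv_lhs => rw [← modByMonic_add_div ((X : ℤ[X]) ^ n - 1) (cyclotomic n ℤ)]
    rw [(modByMonic_eq_zero_iff_dvd hmon).mpr hdvd, zero_add]; rfl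
  have hdegX : ((X : ℤ[X]) ^ n - 1).natDegree = n := by
    rw [show ((X : ℤ[X]) ^ n - 1) = X ^ n - C 1 by simp, natDegree_sub_C, natDegree_X_pow]
  have hdegPsi : (Psi n).natDegree = N := by
    rw [Psi, natDegree_divByMonic _ hmon, hdegX, natDegree_cyclotomic]
  have htot : Nat.totient n ≤ n := Nat.totient_le n
  have hrefl : reflect N (Psi n) = -(Psi n) := by
    have key : reflect n ((X : ℤ[X]) ^ n - 1) = -((X : ℤ[X]) ^ n - 1) := by
      have : (X : ℤ[X]) ^ n - 1 = X ^ n + C (-1) := by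
        simp [sub_eq_add_neg]
      rw [this, reflect_add, reflect_monomial, reflect_C, revAt_le (le_refl n)]
      simp
    rw [hmul] at key
    have hsplit := reflect_mul (cyclotomic n ℤ) (Psi n)
      (le_of_eq (natDegree_cyclotomic n ℤ)) (le_of_eq hdegPsi)
    rw [show Nat.totient n + N = n by omega] at hsplit
    rw [hsplit, cyclotomic_reflect n hn] at key
    have hne : cyclotomic n ℤ ≠ 0 := hmon.ne_zero
    have key2 : cyclotomic n ℤ * reflect N (Psi n) = cyclotomic n ℤ * (-(Psi n)) :=
      key.trans (by ring)
    exact mul_left_cancel₀ hne key2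
  have hc := congrArg (fun p => p.coeff (N / 2)) hrefl
  simp only [coeff_reflect, coeff_neg] at hc
  rw [revAt_le (Nat.div_le_self N 2)] at hc
  have : N - N / 2 = N / 2 := by omega
  rw [this] at hc
  omega
end

section
/- If n has at least two prime divisors counted with multiplicity (i.e., n is neither 1 nor prime), then some coefficient of Ψ_n(x) equals 0. -/
open Polynomial

lemma psi_mul (n : ℕ) : cyclotomic n ℤ * Psi n = X ^ n - 1 := by
  have h := cyclotomic.dvd_X_pow_sub_one n ℤ
  have hm := cyclotomic.monic n ℤ
  have h0 := (modByMonic_eq_zero_iff_dvd hm).2 h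
  have := modByMonic_add_div (X ^ n - 1 : ℤ[X]) (cyclotomic n ℤ)
  rw [h0, zero_add] at this
  exact this

lemma X_pow_sub_one_ne_zero' {n : ℕ} (hn : 0 < n) : (X ^ n - 1 : ℤ[X]) ≠ 0 := by
  have : ((X ^ n - 1 : ℤ[X])).coeff 0 = -1 := by
    rw [coeff_sub, coeff_X_pow, if_neg (by omega : ¬ (0 = n))]
    simp
  intro h
  rw [h] at this
  simp at this

lemma psi_ne_zero {n : ℕ} (hn : 0 < n) : Psi n ≠ 0 := by
  intro h
  have := psi_mul n
  rw [h, mul_zero] at this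
  exact X_pow_sub_one_ne_zero' hn this.symm

lemma psi_natDegree {n : ℕ} (hn : 0 < n) : (Psi n).natDegree = n - Nat.totient n := by
  have h := psi_mul n
  have := congrArg natDegree h
  rw [natDegree_mul (cyclotomic_ne_zero n ℤ) (psi_ne_zero hn), natDegree_cyclotomic,
    (by rw [(by rw [map_one] : (X ^ n - 1 : ℤ[X]) = X ^ n - C 1)]; exact natDegree_X_pow_sub_C : (X ^ n - 1 : ℤ[X]).natDegree = n)] at this
  omega

lemma psi_coeff_zero {n : ℕ} (hn : 1 < n) : (Psi n).coeff 0 = -1 := by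
  have h := congrArg (fun p => coeff p 0) (psi_mul n)
  simp only [mul_coeff_zero, cyclotomic_coeff_zero ℤ hn] at h
  rw [coeff_sub, coeff_X_pow, if_neg (by omega : ¬ (0 = n))] at h
  simpa using h


lemma reverse_X_pow_sub_one {n : ℕ} (hn : 0 < n) :
    (X ^ n - 1 : ℤ[X]).reverse = 1 - X ^ n := by
  have hdeg : (X ^ n - 1 : ℤ[X]).natDegree = n := by
    rw [(by rw [map_one] : (X ^ n - 1 : ℤ[X]) = X ^ n - C 1)]; exact natDegree_X_pow_sub_C
  ext k
  rcases le_or_gt k n with h | h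
  · rw [coeff_reverse, hdeg, revAt_le h]
    simp only [coeff_sub, coeff_X_pow, coeff_one]
    split_ifs <;> omega
  · rw [coeff_reverse, hdeg, revAt_eq_self_of_lt h]
    simp only [coeff_sub, coeff_X_pow, coeff_one]
    split_ifs <;> omega

lemma reverse_prod_cyclotomic (s : Finset ℕ) :
    (∏ d ∈ s, cyclotomic d ℤ).reverse = ∏ d ∈ s, (cyclotomic d ℤ).reverse := by
  classical
  induction s using Finset.induction_on with
  | empty => simp [reverse]
  | insert _ _ h ih =>
    rw [Finset.prod_insert h, Finset.prod_insert h, reverse_mul_of_domain, ih]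

lemma cyclotomic_reverse : ∀ n : ℕ, 0 < n →
    (cyclotomic n ℤ).reverse = if n = 1 then -(cyclotomic 1 ℤ) else cyclotomic n ℤ := by
  intro n
  induction n using Nat.strong_induction_on with
  | _ n IH =>
  intro hn
  by_cases h1 : n = 1
  · subst h1
    rw [if_pos rfl, cyclotomic_one]
    have := reverse_X_pow_sub_one (n := 1) one_pos
    rw [pow_one] at this
    rw [this]; ring
  · rw [if_neg h1]
    have hsplit : (X ^ n - 1 : ℤ[X]) =
        cyclotomic n ℤ * ∏ d ∈ Nat.properDivisors n, cyclotomic d ℤ := by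
      rw [← prod_cyclotomic_eq_X_pow_sub_one hn ℤ, ← Nat.cons_self_properDivisors hn.ne',
        Finset.prod_cons]
    have hrev := congrArg reverse hsplit
    rw [reverse_X_pow_sub_one hn, reverse_mul_of_domain, reverse_prod_cyclotomic] at hrev
    have hIH : ∏ d ∈ Nat.properDivisors n, (cyclotomic d ℤ).reverse
        = - ∏ d ∈ Nat.properDivisors n, cyclotomic d ℤ := by
      have hcong : ∀ d ∈ Nat.properDivisors n, (cyclotomic d ℤ).reverse
          = (if d = 1 then (-1 : ℤ[X]) else 1) * cyclotomic d ℤ := by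
        intro d hd
        rw [IH d (Nat.mem_properDivisors.1 hd).2 (Nat.pos_of_mem_properDivisors hd)]
        by_cases h : d = 1 <;> simp [h]
      rw [Finset.prod_congr rfl hcong, Finset.prod_mul_distrib,
        Finset.prod_ite_eq' (Nat.properDivisors n) 1 (fun _ => (-1 : ℤ[X])),
        if_pos (Nat.one_mem_properDivisors_iff_one_lt.2 (by omega))]
      ring
    rw [hIH] at hrev
    have hne : (∏ d ∈ Nat.properDivisors n, cyclotomic d ℤ) ≠ 0 :=
      Finset.prod_ne_zero_iff.2 fun d _ => cyclotomic_ne_zero d ℤ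
    refine (mul_right_cancel₀ hne ?_).symm
    linear_combination -hrev - hsplit

lemma psi_reverse {n : ℕ} (hn : 1 < n) : (Psi n).reverse = -(Psi n) := by
  have hrev := congrArg reverse (psi_mul n)
  rw [reverse_X_pow_sub_one (by omega), reverse_mul_of_domain,
    cyclotomic_reverse n (by omega), if_neg (by omega)] at hrev
  refine mul_left_cancel₀ (cyclotomic_ne_zero n ℤ) ?_
  have hpm := psi_mul n
  linear_combination hrev + hpm

lemma psi_coeff_symm {n : ℕ} (hn : 1 < n) {k : ℕ} (hk : k ≤ n - Nat.totient n) :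
    (Psi n).coeff (n - Nat.totient n - k) = -(Psi n).coeff k := by
  have hD := psi_natDegree (by omega : 0 < n)
  have h := congrArg (fun p => coeff p k) (psi_reverse hn)
  simp only [coeff_reverse, coeff_neg, hD] at h
  rw [revAt_le (by omega)] at h
  exact h

lemma even_case {n : ℕ} (hn : 1 < n) (he : Even (n - Nat.totient n)) :
    ∃ k ≤ n - Nat.totient n, (Psi n).coeff k = 0 := by
  obtain ⟨m, hm⟩ := he
  refine ⟨m, by omega, ?_⟩
  have h := psi_coeff_symm hn (k := m) (by omega)
  rw [(by omega : n - Nat.totient n - m = m)] at h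
  linarith

lemma coeff_eq_of_X_pow_dvd {f g : ℤ[X]} {K : ℕ} (h : (X : ℤ[X]) ^ K ∣ f - g)
    {k : ℕ} (hk : k < K) : f.coeff k = g.coeff k := by
  have := (X_pow_dvd_iff.1 h) k hk
  rw [coeff_sub] at this
  linarith

lemma cyclo_mod : ∀ m : ℕ, 1 < m → Squarefree m →
    (Even m.primeFactors.card → (X : ℤ[X]) ^ m.minFac ∣ cyclotomic m ℤ - (1 - X)) ∧
    (¬ Even m.primeFactors.card →
      (X : ℤ[X]) ^ m.minFac ∣ cyclotomic m ℤ * (1 - X) - 1) := by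
  intro m
  induction m using Nat.strong_induction_on with
  | _ m IH =>
  intro hm hsf
  set q := m.minFac with hqdef
  have hq : q.Prime := Nat.minFac_prime (by omega)
  have hqm : q ∣ m := Nat.minFac_dvd m
  set m' := m / q with hm'def
  have hmm : m' * q = m := Nat.div_mul_cancel hqm
  have hm'0 : m' ≠ 0 := by
    intro h
    rw [h, zero_mul] at hmm
    omega
  by_cases h1 : m' = 1
  · -- m is prime
    have hmq : m = q := by rw [← hmm, h1, one_mul]
    have hcard : m.primeFactors.card = 1 := by
      rw [hmq, hq.primeFactors]; simp
    constructor
    · intro he; rw [hcard] at he; simp at he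
    · intro _
      haveI : Fact q.Prime := ⟨hq⟩
      rw [hmq, cyclotomic_prime]
      refine ⟨-1, ?_⟩
      have hg := geom_sum_mul (X : ℤ[X]) q
      linear_combination -hg
  · -- inductive step
    have hm'1 : 1 < m' := by
      rcases Nat.two_le_iff m' |>.2 ⟨hm'0, h1⟩ with h
      omega
    have hsf' : Squarefree m' := hsf.squarefree_of_dvd ⟨q, hmm.symm⟩
    have hqnd : ¬ q ∣ m' := by
      intro hd
      have : q * q ∣ m := by
        obtain ⟨c, hc⟩ := hd
        exact ⟨c, by rw [← hmm, hc]; ring⟩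
      exact (Nat.squarefree_iff_prime_squarefree.1 hsf) q hq this
    set q' := m'.minFac with hq'def
    have hq' : q'.Prime := Nat.minFac_prime (by omega)
    have hq'm' : q' ∣ m' := Nat.minFac_dvd m'
    have hlt : q < q' := by
      have h1 : q ≤ q' := Nat.minFac_le_of_dvd hq'.two_le (hq'm'.trans ⟨q, hmm.symm⟩)
      have h2 : q ≠ q' := fun h => hqnd (h ▸ hq'm')
      omega
    have hIH := IH m' (by
      have : 1 < q := hq.one_lt
      calc m' < m' * q := by nlinarith
      _ = m := hmm) hm'1 hsf'
    have hexp : Polynomial.expand ℤ q (cyclotomic m' ℤ) = cyclotomic m ℤ * cyclotomic m' ℤ := by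
      rw [← hmm]; exact cyclotomic_expand_eq_cyclotomic_mul hq hqnd ℤ
    have hcard : m.primeFactors.card = m'.primeFactors.card + 1 := by
      have hdisj : Disjoint m'.primeFactors ({q} : Finset ℕ) := by
        simp only [Finset.disjoint_singleton_right, Nat.mem_primeFactors]
        intro ⟨_, hdd, _⟩; exact hqnd hdd
      rw [← hmm, Nat.primeFactors_mul (by omega) hq.ne_zero, hq.primeFactors,
        Finset.card_union_of_disjoint hdisj]
      simp
    have hv : (X : ℤ[X]) ^ q ∣ Polynomial.expand ℤ q (cyclotomic m' ℤ) - 1 := by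
      rw [X_pow_dvd_iff]
      intro d hd
      rw [coeff_sub, coeff_expand hq.pos]
      by_cases hd0 : d = 0
      · subst hd0
        rw [if_pos (dvd_zero q), Nat.zero_div, cyclotomic_coeff_zero ℤ hm'1]
        simp
      · rw [if_neg (fun hdd => hd0 (Nat.eq_zero_of_dvd_of_lt hdd hd))]
        simp [coeff_one, hd0]
    have hparity : ¬ Even m'.primeFactors.card ↔ Even m.primeFactors.card := by
      rw [hcard, Nat.even_add_one]
    constructor
    · intro he
      have hu := hIH.2 (hparity.2 he)
      have hu' : (X : ℤ[X]) ^ q ∣ cyclotomic m' ℤ * (1 - X) - 1 :=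
        dvd_trans (pow_dvd_pow X hlt.le) hu
      have key : cyclotomic m ℤ - (1 - X) =
          (1 - X) * (Polynomial.expand ℤ q (cyclotomic m' ℤ) - 1)
            - cyclotomic m ℤ * (cyclotomic m' ℤ * (1 - X) - 1) := by
        linear_combination ((X:ℤ[X]) - 1) * hexp
      rw [key]
      exact dvd_sub (hv.mul_left _) (hu'.mul_left _)
    · intro he
      have hu := hIH.1 (by
        by_contra hcon
        exact he (hparity.1 hcon))
      have hu' : (X : ℤ[X]) ^ q ∣ cyclotomic m' ℤ - (1 - X) :=
        dvd_trans (pow_dvd_pow X hlt.le) hu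
      have key : (cyclotomic m ℤ * (1 - X) - 1) * cyclotomic m' ℤ =
          (1 - X) * (Polynomial.expand ℤ q (cyclotomic m' ℤ) - 1)
            - (cyclotomic m' ℤ - (1 - X)) := by
        linear_combination ((X:ℤ[X]) - 1) * hexp
      have hdvd2 : (X : ℤ[X]) ^ q ∣ (cyclotomic m ℤ * (1 - X) - 1) * cyclotomic m' ℤ := by
        rw [key]
        exact dvd_sub (hv.mul_left _) hu'
      have hXB : ¬ (X : ℤ[X]) ∣ cyclotomic m' ℤ := by
        rw [X_dvd_iff, cyclotomic_coeff_zero ℤ hm'1]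
        norm_num
      exact Prime.pow_dvd_of_dvd_mul_right prime_X q hXB hdvd2

lemma cyclo_coeff_even {m : ℕ} (hm : 1 < m) (hsf : Squarefree m)
    (he : Even m.primeFactors.card) {k : ℕ} (hk : k < m.minFac) :
    (cyclotomic m ℤ).coeff k = (1 - X : ℤ[X]).coeff k :=
  coeff_eq_of_X_pow_dvd ((cyclo_mod m hm hsf).1 he) hk

lemma cyclo_coeff_odd {m : ℕ} (hm : 1 < m) (hsf : Squarefree m)
    (ho : ¬ Even m.primeFactors.card) :
    ∀ k, k < m.minFac → (cyclotomic m ℤ).coeff k = 1 := by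
  have hdvd := (cyclo_mod m hm hsf).2 ho
  have hco : ∀ d, d < m.minFac → (cyclotomic m ℤ * (1 - X) - 1).coeff d = 0 :=
    X_pow_dvd_iff.1 hdvd
  intro k
  induction k with
  | zero => intro _; exact cyclotomic_coeff_zero ℤ hm
  | succ k ih =>
    intro hk
    have h := hco (k + 1) hk
    have hexpand : cyclotomic m ℤ * (1 - X) = cyclotomic m ℤ - cyclotomic m ℤ * X := by
      ring
    rw [hexpand, coeff_sub, coeff_sub, coeff_mul_X, coeff_one,
      if_neg (by omega : ¬ (k + 1 = 0))] at h
    have hik := ih (by omega)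
    rw [hik] at h
    linarith

lemma psi_coeff_one_odd {m : ℕ} (hm : 1 < m) (hsf : Squarefree m)
    (ho : ¬ Even m.primeFactors.card) : (Psi m).coeff 1 = 1 := by
  have h := congrArg (fun p => coeff p 1) (psi_mul m)
  simp only [coeff_mul, Finset.Nat.sum_antidiagonal_eq_sum_range_succ_mk] at h
  rw [Finset.sum_range_succ, Finset.sum_range_one] at h
  have ha0 : (cyclotomic m ℤ).coeff 0 = 1 := cyclotomic_coeff_zero ℤ hm
  have ha1 : (cyclotomic m ℤ).coeff 1 = 1 :=
    cyclo_coeff_odd hm hsf ho 1 (Nat.minFac_prime (by omega)).one_lt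
  have hc0 : (Psi m).coeff 0 = -1 := psi_coeff_zero hm
  rw [ha0, ha1, hc0, coeff_sub, coeff_X_pow, if_neg (by omega : ¬ (1 = m)), coeff_one,
    if_neg (by omega : ¬ (1 = 0))] at h
  linarith

lemma psi_expand_of_dvd {p m : ℕ} (hp : p.Prime) (hdvd : p ∣ m) (hm : 0 < m) :
    Psi (m * p) = Polynomial.expand ℤ p (Psi m) := by
  have hexp : Polynomial.expand ℤ p (cyclotomic m ℤ) = cyclotomic (m * p) ℤ :=
    cyclotomic_expand_eq_cyclotomic hp hdvd ℤ
  have h1 : cyclotomic (m * p) ℤ * Polynomial.expand ℤ p (Psi m) = X ^ (m * p) - 1 := by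
    rw [← hexp, ← map_mul, psi_mul]
    rw [map_sub, map_one, map_pow, expand_X, ← pow_mul, mul_comm p m]
  have h2 := psi_mul (m * p)
  exact mul_left_cancel₀ (cyclotomic_ne_zero (m * p) ℤ) (h2.trans h1.symm)

lemma psi_expand_of_not_dvd {p m : ℕ} (hp : p.Prime) (hdvd : ¬ p ∣ m) (hm : 0 < m) :
    Psi (m * p) = Polynomial.expand ℤ p (Psi m) * cyclotomic m ℤ := by
  have hexp : Polynomial.expand ℤ p (cyclotomic m ℤ) = cyclotomic (m * p) ℤ * cyclotomic m ℤ :=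
    cyclotomic_expand_eq_cyclotomic_mul hp hdvd ℤ
  have h1 : cyclotomic (m * p) ℤ * (Polynomial.expand ℤ p (Psi m) * cyclotomic m ℤ)
      = X ^ (m * p) - 1 := by
    have : cyclotomic (m * p) ℤ * (Polynomial.expand ℤ p (Psi m) * cyclotomic m ℤ)
        = (cyclotomic (m * p) ℤ * cyclotomic m ℤ) * Polynomial.expand ℤ p (Psi m) := by ring
    rw [this, ← hexp, ← map_mul, psi_mul]
    rw [map_sub, map_one, map_pow, expand_X, ← pow_mul, mul_comm p m]
  have h2 := psi_mul (m * p)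
  exact mul_left_cancel₀ (cyclotomic_ne_zero (m * p) ℤ) (h2.trans h1.symm)

theorem psi_has_zero_coeff (n : ℕ) (hn : 0 < n) (hn1 : n ≠ 1) (hp : ¬ n.Prime) :
    ∃ k ≤ n - Nat.totient n, (Psi n).coeff k = 0 := by
  have hn2 : 2 < n := by
    by_contra h
    interval_cases n
    · exact hn1 rfl
    · exact hp Nat.prime_two
  by_cases hev : Even n
  · -- even case: middle coefficient
    apply even_case (by omega)
    rw [Nat.even_sub (Nat.totient_le n)]
    constructor
    · intro _; exact Nat.totient_even hn2
    · intro _; exact hev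
  · -- odd case
    by_cases hsf : Squarefree n
    · -- odd squarefree composite
      set p := n.minFac with hpdef
      have hpp : p.Prime := Nat.minFac_prime (by omega)
      have hpd : p ∣ n := Nat.minFac_dvd n
      set m := n / p with hmdef
      have hnm : m * p = n := Nat.div_mul_cancel hpd
      have hm0 : m ≠ 0 := by
        intro h; rw [h, zero_mul] at hnm; omega
      have hm1 : m ≠ 1 := by
        intro h; rw [h, one_mul] at hnm; exact hp (hnm ▸ hpp)
      have hm2 : 1 < m := by
        rcases Nat.two_le_iff m |>.2 ⟨hm0, hm1⟩ with h; omega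
      have hpodd : p ≠ 2 := by
        intro h
        exact hev (even_iff_two_dvd.2 (h ▸ hpd))
      have hp3 : 3 ≤ p := by
        have := hpp.two_le; omega
      have hpnd : ¬ p ∣ m := by
        intro hd
        have : p * p ∣ n := by
          obtain ⟨c, hc⟩ := hd
          exact ⟨c, by rw [← hnm, hc]; ring⟩
        exact (Nat.squarefree_iff_prime_squarefree.1 hsf) p hpp this
      have hmsf : Squarefree m := hsf.squarefree_of_dvd ⟨p, hnm.symm⟩
      set q' := m.minFac with hq'def
      have hq' : q'.Prime := Nat.minFac_prime (by omega)
      have hq'm : q' ∣ m := Nat.minFac_dvd m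
      have hltpq : p < q' := by
        have h1 : p ≤ q' := Nat.minFac_le_of_dvd hq'.two_le (hq'm.trans ⟨p, hnm.symm⟩)
        have h2 : p ≠ q' := fun h => hpnd (h ▸ hq'm)
        omega
      have hq'le : q' ≤ m := Nat.minFac_le (by omega)
      -- totient bound : m + totient n ≤ n
      obtain ⟨p', hp'⟩ : ∃ p', p = p' + 1 := ⟨p - 1, by omega⟩
      have hcop : Nat.Coprime m p := ((Nat.Prime.coprime_iff_not_dvd hpp).2 hpnd).symm
      have htot : Nat.totient n = Nat.totient m * p' := by
        rw [← hnm, Nat.totient_mul hcop, Nat.totient_prime hpp, hp']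
        simp
      have hbound : m + Nat.totient n ≤ n := by
        calc m + Nat.totient n = m + Nat.totient m * p' := by rw [htot]
        _ ≤ m + m * p' := Nat.add_le_add_left (Nat.mul_le_mul_right p' (Nat.totient_le m)) m
        _ = m * (p' + 1) := by ring
        _ = n := by rw [← hp', hnm]
      have hpsi : Psi n = Polynomial.expand ℤ p (Psi m) * cyclotomic m ℤ := by
        rw [← hnm]; exact psi_expand_of_not_dvd hpp hpnd (by omega)
      have hcard : n.primeFactors.card = m.primeFactors.card + 1 := by
        have hdisj : Disjoint m.primeFactors ({p} : Finset ℕ) := by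
          simp only [Finset.disjoint_singleton_right, Nat.mem_primeFactors]
          intro ⟨_, hdd, _⟩; exact hpnd hdd
        rw [← hnm, Nat.primeFactors_mul (by omega) hpp.ne_zero, hpp.primeFactors,
          Finset.card_union_of_disjoint hdisj]
        simp
      by_cases hpar : Even m.primeFactors.card
      · -- coefficient 2 is zero
        refine ⟨2, by omega, ?_⟩
        rw [hpsi, coeff_mul, Finset.Nat.sum_antidiagonal_eq_sum_range_succ_mk]
        rw [Finset.sum_range_succ, Finset.sum_range_succ, Finset.sum_range_one]
        have hE0 : (Polynomial.expand ℤ p (Psi m)).coeff 0 = -1 := by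
          rw [coeff_expand hpp.pos, if_pos (dvd_zero p), Nat.zero_div, psi_coeff_zero hm2]
        have hE1 : (Polynomial.expand ℤ p (Psi m)).coeff 1 = 0 := by
          rw [coeff_expand hpp.pos, if_neg]
          intro hd
          exact absurd (Nat.le_of_dvd one_pos hd) (by omega)
        have hE2 : (Polynomial.expand ℤ p (Psi m)).coeff 2 = 0 := by
          rw [coeff_expand hpp.pos, if_neg]
          intro hd
          exact absurd (Nat.le_of_dvd two_pos hd) (by omega)
        have hA2 : (cyclotomic m ℤ).coeff 2 = 0 := by
          rw [cyclo_coeff_even hm2 hmsf hpar (by omega : 2 < m.minFac)]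
          rw [coeff_sub, coeff_one, coeff_X]
          norm_num
        rw [hE0, hE1, hE2, hA2]
        ring
      · -- coefficient p is zero
        refine ⟨p, by omega, ?_⟩
        rw [hpsi, coeff_mul, Finset.Nat.sum_antidiagonal_eq_sum_range_succ_mk]
        rw [Finset.sum_range_succ]
        have hmain : ∑ i ∈ Finset.range p,
            (Polynomial.expand ℤ p (Psi m)).coeff i * (cyclotomic m ℤ).coeff (p - i)
            = -1 := by
          rw [Finset.sum_eq_single_of_mem 0 (Finset.mem_range.2 hpp.pos)]
          · rw [coeff_expand hpp.pos, if_pos (dvd_zero p), Nat.zero_div, psi_coeff_zero hm2,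
              Nat.sub_zero, cyclo_coeff_odd hm2 hmsf hpar p (by omega)]
            ring
          · intro b hb hb0
            rw [coeff_expand hpp.pos, if_neg, zero_mul]
            intro hd
            have := Nat.le_of_dvd (by omega) hd
            have := Finset.mem_range.1 hb
            omega
        rw [hmain, tsub_self, coeff_expand hpp.pos, if_pos (dvd_refl p), Nat.div_self hpp.pos,
          psi_coeff_one_odd hm2 hmsf hpar, cyclotomic_coeff_zero ℤ hm2]
        ring
    · -- not squarefree
      rw [Nat.squarefree_iff_prime_squarefree] at hsf
      push_neg at hsf
      obtain ⟨q, hq, hqq⟩ := hsf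
      have hq2 : 2 ≤ q := hq.two_le
      have hqd : q ∣ n := (dvd_mul_right q q).trans hqq
      set m := n / q with hmdef
      have hnm : m * q = n := Nat.div_mul_cancel hqd
      have hm0 : m ≠ 0 := by
        intro h; rw [h, zero_mul] at hnm; omega
      have hqm : q ∣ m := by
        obtain ⟨c, hc⟩ := hqq
        refine ⟨c, ?_⟩
        have h2 : m * q = (q * c) * q := by rw [hnm, hc]; ring
        exact Nat.eq_of_mul_eq_mul_right (by omega) h2
      have hpsi : Psi n = Polynomial.expand ℤ q (Psi m) := by
        rw [← hnm]; exact psi_expand_of_dvd hq hqm (Nat.pos_of_ne_zero hm0)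
      refine ⟨1, ?_, ?_⟩
      · have := Nat.totient_lt n (by omega)
        omega
      · rw [hpsi, coeff_expand hq.pos, if_neg]
        intro hd
        exact absurd (Nat.le_of_dvd one_pos hd) (by omega)
end

section
/- If p < q are distinct primes, then every coefficient of Ψ_{pq}(x) lies in {-1, 0, 1} (i.e., Ψ_{pq} is flat). -/
open Polynomial

lemma geom_coeff (q k : ℕ) :
    (∑ i ∈ Finset.range q, (X : ℤ[X]) ^ i).coeff k = if k < q then 1 else 0 := by
  simp [finset_sum_coeff, coeff_X_pow, ← Finset.mem_range, Finset.sum_ite_eq]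

theorem psi_prime_mul_prime_flat (p q : ℕ) (hp : p.Prime) (hq : q.Prime) (hpq : p < q)
    (k : ℕ) : |(Psi (p * q)).coeff k| ≤ 1 := by
  haveI : Fact p.Prime := ⟨hp⟩
  haveI : Fact q.Prime := ⟨hq⟩
  have hp1 := hp.one_lt
  have hq1 := hq.one_lt
  have hne : p ≠ q := hpq.ne
  have hdiv : (p * q).divisors = {1, p, q, p * q} := by
    rw [Nat.divisors_mul, hp.divisors, hq.divisors]
    ext d
    simp only [Finset.mem_mul, Finset.mem_insert, Finset.mem_singleton]
    constructor
    · rintro ⟨a, (rfl | rfl), b, (rfl | rfl), rfl⟩ <;> simp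
    · rintro (h | h | h | h)
      · exact ⟨1, Or.inl rfl, 1, Or.inl rfl, by omega⟩
      · exact ⟨p, Or.inr rfl, 1, Or.inl rfl, by omega⟩
      · exact ⟨1, Or.inl rfl, q, Or.inr rfl, by omega⟩
      · exact ⟨p, Or.inr rfl, q, Or.inr rfl, h.symm⟩
  have hprod : (X : ℤ[X]) ^ (p * q) - 1 =
      cyclotomic (p * q) ℤ *
        ((X ^ p - 1) * ∑ i ∈ Finset.range q, X ^ i) := by
    rw [← prod_cyclotomic_eq_X_pow_sub_one (by positivity) ℤ, hdiv]
    have h1p : (1 : ℕ) ≠ p := by omega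
    have h1q : (1 : ℕ) ≠ q := by omega
    have h1pq : (1 : ℕ) ≠ p * q := by nlinarith
    have hppq : p ≠ p * q := by nlinarith
    have hqpq : q ≠ p * q := by nlinarith
    rw [Finset.prod_insert (by simp [h1p, h1q, h1pq]),
      Finset.prod_insert (by simp [hne, hppq]),
      Finset.prod_insert (by simp [hqpq]), Finset.prod_singleton]
    rw [cyclotomic_one, cyclotomic_prime, cyclotomic_prime]
    have h : (X - 1 : ℤ[X]) * ∑ i ∈ Finset.range p, X ^ i = X ^ p - 1 := by
      rw [mul_comm, geom_sum_mul]
    linear_combination ((∑ i ∈ Finset.range q, (X:ℤ[X]) ^ i) * cyclotomic (p * q) ℤ) * h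
  have hPsi : Psi (p * q) = (X ^ p - 1) * ∑ i ∈ Finset.range q, X ^ i := by
    rw [Psi, hprod, Polynomial.mul_divByMonic_cancel_left _ (cyclotomic.monic _ ℤ)]
  rw [hPsi, sub_mul, one_mul, coeff_sub, coeff_X_pow_mul', geom_coeff]
  split_ifs with h1 h2 h2 <;> simp [geom_coeff] <;> split_ifs <;> simp
end

section
/- For distinct odd primes p, q, r, Ψ_{pqr}(x) = (x - 1)·(Σ_{j=0}^{q-1} x^{jp})·(Σ_{j=0}^{r-1} x^{jq})·(Σ_{j=0}^{p-1} x^{jr}). -/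
open Polynomial Pointwise

lemma finset_mul_one_r {s : Finset ℕ} (r : ℕ) : s * {1, r} = s ∪ s.image (· * r) := by
  rw [show ({1,r} : Finset ℕ) = {1} ∪ {r} by rfl, Finset.mul_union,
    Finset.mul_singleton, Finset.mul_singleton]
  simp [Finset.smul_finset_def, MulOpposite.smul_eq_mul_unop]

lemma divisors_pq {p q : ℕ} (hp : p.Prime) (hq : q.Prime) :
    (p*q).divisors = {1, p, q, p*q} := by
  rw [Nat.divisors_mul, hp.divisors, hq.divisors, finset_mul_one_r]
  ext a
  simp
  tauto

lemma divisors_pqr {p q r : ℕ} (hp : p.Prime) (hq : q.Prime) (hr : r.Prime) :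
    (p*q*r).divisors = {1, p, q, p*q, r, p*r, q*r, p*q*r} := by
  rw [Nat.divisors_mul, divisors_pq hp hq, hr.divisors, finset_mul_one_r]
  ext a
  simp
  tauto

lemma prime_ne_mul {p q r : ℕ} (hp : p.Prime) (hq : q.Prime) (hr : r.Prime)
    (hpq : p ≠ q) : p ≠ q * r := by
  intro h
  rcases (Nat.Prime.eq_one_or_self_of_dvd hp q ⟨r, h⟩) with h1 | h1
  · exact hq.one_lt.ne' h1
  · rw [← h1] at h
    exact hr.one_lt.ne' (Nat.eq_of_mul_eq_mul_left hq.pos (by simpa using h)).symm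

lemma X_pow_pq {p q : ℕ} (hp : p.Prime) (hq : q.Prime) (hpq : p ≠ q) :
    (X : ℤ[X]) ^ (p*q) - 1 =
      (X - 1) * cyclotomic p ℤ * cyclotomic q ℤ * cyclotomic (p*q) ℤ := by
  have h := prod_cyclotomic_eq_X_pow_sub_one (Nat.mul_pos hp.pos hq.pos) ℤ
  rw [divisors_pq hp hq] at h
  have h1p : (1:ℕ) ≠ p := hp.one_lt.ne
  have h1q : (1:ℕ) ≠ q := hq.one_lt.ne
  have h1pq : (1:ℕ) ≠ p*q := (Nat.one_lt_mul_iff.mpr ⟨hp.pos, hq.pos, Or.inl hp.one_lt⟩).ne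
  have hppq : p ≠ p*q := fun h => hq.one_lt.ne' (Nat.eq_of_mul_eq_mul_left hp.pos (by simpa using h)).symm
  have hqpq : q ≠ p*q := fun h => hp.one_lt.ne' (Nat.eq_of_mul_eq_mul_right hq.pos (by simpa [mul_comm] using h)).symm
  rw [Finset.prod_insert (by simp [h1p, h1q, h1pq]),
    Finset.prod_insert (by simp [hpq, hppq]),
    Finset.prod_insert (by simp [hqpq]), Finset.prod_singleton, cyclotomic_one] at h
  rw [← h]; ring

lemma geom_sum_eq_cyclotomic {p q : ℕ} (hp : p.Prime) (hq : q.Prime) (hpq : p ≠ q) :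
    (∑ j ∈ Finset.range q, (X:ℤ[X]) ^ (j * p)) = cyclotomic q ℤ * cyclotomic (p*q) ℤ := by
  have hXp : (X:ℤ[X]) ^ p - 1 ≠ 0 := by
    intro h
    have := monic_X_pow_sub_C (1 : ℤ) hp.ne_zero
    simpa [h] using this.ne_zero
  apply mul_left_cancel₀ hXp
  have key : ((X:ℤ[X]) ^ p - 1) * ∑ j ∈ Finset.range q, (X:ℤ[X]) ^ (j * p)
      = (X:ℤ[X]) ^ (p*q) - 1 := by
    have := geom_sum_mul ((X:ℤ[X]) ^ p) q
    rw [← pow_mul] at this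
    calc ((X:ℤ[X]) ^ p - 1) * ∑ j ∈ Finset.range q, (X:ℤ[X]) ^ (j * p)
        = (∑ j ∈ Finset.range q, ((X:ℤ[X]) ^ p) ^ j) * ((X:ℤ[X]) ^ p - 1) := by
          rw [mul_comm]; congr 1; apply Finset.sum_congr rfl
          intro j _; rw [← pow_mul, mul_comm]
      _ = (X:ℤ[X]) ^ (p*q) - 1 := this
  rw [key, X_pow_pq hp hq hpq]
  have hXp1 : (X:ℤ[X]) ^ p - 1 = (X - 1) * cyclotomic p ℤ := by
    have h := prod_cyclotomic_eq_X_pow_sub_one hp.pos ℤ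
    rw [hp.divisors, Finset.prod_insert (by simp [hp.one_lt.ne]),
      Finset.prod_singleton, cyclotomic_one] at h
    exact h.symm
  rw [hXp1]; ring

theorem psi_three_primes (p q r : ℕ) (hp : p.Prime) (hq : q.Prime) (hr : r.Prime)
    (hop : Odd p) (hoq : Odd q) (hor : Odd r)
    (hpq : p ≠ q) (hpr : p ≠ r) (hqr : q ≠ r) :
    Psi (p * q * r) =
      (X - 1) * (∑ j ∈ Finset.range q, X ^ (j * p)) *
        (∑ j ∈ Finset.range r, X ^ (j * q)) * (∑ j ∈ Finset.range p, X ^ (j * r)) := by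
  have h1p : (1:ℕ) ≠ p := hp.one_lt.ne
  have h1q : (1:ℕ) ≠ q := hq.one_lt.ne
  have h1r : (1:ℕ) ≠ r := hr.one_lt.ne
  have one_lt_mul : ∀ {a b : ℕ}, a.Prime → b.Prime → 1 < a * b := fun ha hb =>
    Nat.one_lt_mul_iff.mpr ⟨ha.pos, hb.pos, Or.inl ha.one_lt⟩
  have h1pq : (1:ℕ) ≠ p*q := (one_lt_mul hp hq).ne
  have h1pr : (1:ℕ) ≠ p*r := (one_lt_mul hp hr).ne
  have h1qr : (1:ℕ) ≠ q*r := (one_lt_mul hq hr).ne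
  have h1pqr : (1:ℕ) ≠ p*q*r := (Nat.one_lt_mul_iff.mpr ⟨Nat.mul_pos hp.pos hq.pos, hr.pos, Or.inl (one_lt_mul hp hq)⟩).ne
  have ne_of_cancel_left : ∀ {a b c : ℕ}, 0 < a → b ≠ c → a * b ≠ a * c :=
    fun ha hbc h => hbc (Nat.eq_of_mul_eq_mul_left ha h)
  have hppq : p ≠ p*q := fun h => hq.one_lt.ne' (Nat.eq_of_mul_eq_mul_left hp.pos (by simpa using h)).symm
  have hppr : p ≠ p*r := fun h => hr.one_lt.ne' (Nat.eq_of_mul_eq_mul_left hp.pos (by simpa using h)).symm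
  have hqpq : q ≠ p*q := fun h => hp.one_lt.ne' (Nat.eq_of_mul_eq_mul_right hq.pos (by simpa [mul_comm] using h)).symm
  have hqqr : q ≠ q*r := fun h => hr.one_lt.ne' (Nat.eq_of_mul_eq_mul_left hq.pos (by simpa using h)).symm
  have hrpr : r ≠ p*r := fun h => hp.one_lt.ne' (Nat.eq_of_mul_eq_mul_right hr.pos (by simpa using h)).symm
  have hrqr : r ≠ q*r := fun h => hq.one_lt.ne' (Nat.eq_of_mul_eq_mul_right hr.pos (by simpa using h)).symm
  have hpqr' : p ≠ q*r := prime_ne_mul hp hq hr hpq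
  have hqpr : q ≠ p*r := prime_ne_mul hq hp hr (Ne.symm hpq)
  have hrpq : r ≠ p*q := prime_ne_mul hr hp hq (Ne.symm hpr)
  have hpq_pr : p*q ≠ p*r := ne_of_cancel_left hp.pos hqr
  have hpq_qr : p*q ≠ q*r := by
    intro h
    apply hpr
    apply Nat.eq_of_mul_eq_mul_left hq.pos
    rw [mul_comm q p, h]
  have hpr_qr : p*r ≠ q*r := fun h => hpq (Nat.eq_of_mul_eq_mul_right hr.pos h)
  have hppqr : p ≠ p*q*r := by
    rw [mul_assoc]
    exact fun h => (one_lt_mul hq hr).ne' (Nat.eq_of_mul_eq_mul_left hp.pos (by simpa using h)).symm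
  have hqpqr : q ≠ p*q*r := fun h => by
    rw [mul_comm p q, mul_assoc] at h
    exact (one_lt_mul hp hr).ne' (Nat.eq_of_mul_eq_mul_left hq.pos (by simpa using h)).symm
  have hrpqr : r ≠ p*q*r := fun h => by
    rw [mul_comm] at h
    exact (one_lt_mul hp hq).ne' (Nat.eq_of_mul_eq_mul_left hr.pos (show r*1 = r*(p*q) by simpa using h)).symm
  have hpq_pqr : p*q ≠ p*q*r := fun h => hr.one_lt.ne' (Nat.eq_of_mul_eq_mul_left (Nat.mul_pos hp.pos hq.pos) (by simpa using h)).symm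
  have hpr_pqr : p*r ≠ p*q*r := by
    rw [mul_right_comm p q r]
    exact fun h => hq.one_lt.ne' (Nat.eq_of_mul_eq_mul_left (Nat.mul_pos hp.pos hr.pos) (by simpa using h)).symm
  have hqr_pqr : q*r ≠ p*q*r := by
    rw [mul_assoc]
    exact fun h => hp.one_lt.ne' (Nat.eq_of_mul_eq_mul_right (Nat.mul_pos hq.pos hr.pos) (by simpa using h)).symm
  -- factorization of X^(pqr) - 1
  have hbig : (X:ℤ[X]) ^ (p*q*r) - 1 =
      cyclotomic (p*q*r) ℤ * ((X - 1) * (cyclotomic q ℤ * cyclotomic (p*q) ℤ) *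
        (cyclotomic r ℤ * cyclotomic (q*r) ℤ) * (cyclotomic p ℤ * cyclotomic (p*r) ℤ)) := by
    have h := prod_cyclotomic_eq_X_pow_sub_one
      (Nat.mul_pos (Nat.mul_pos hp.pos hq.pos) hr.pos) ℤ
    rw [divisors_pqr hp hq hr] at h
    rw [Finset.prod_insert (by simp [h1p, h1q, h1r, h1pq, h1pr, h1qr, h1pqr]),
      Finset.prod_insert (by simp [hpq, hpr, hppq, hppr, hpqr', hppqr]),
      Finset.prod_insert (by simp [hqr, hqpq, hqpr, hqqr, hqpqr]),
      Finset.prod_insert (by simp [hrpq.symm, hpq_pr, hpq_qr, hpq_pqr]),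
      Finset.prod_insert (by simp [hrpr, hrqr, hrpqr]),
      Finset.prod_insert (by simp [hpr_qr, hpr_pqr]),
      Finset.prod_insert (by simp [hqr_pqr]),
      Finset.prod_singleton, cyclotomic_one] at h
    rw [← h]; ring
  rw [Psi, hbig, mul_divByMonic_cancel_left _ (cyclotomic.monic _ ℤ),
    geom_sum_eq_cyclotomic hp hq hpq, geom_sum_eq_cyclotomic hq hr hqr,
    geom_sum_eq_cyclotomic hr hp (Ne.symm hpr)]
  rw [mul_comm r p]
end

section
/- Let p < q be odd primes and let ρ, σ be the unique nonnegative integers with (p-1)(q-1) = ρp + σq. Then the coefficient a_{pq}(k) of x^k in Φ_{pq}(x) equals 1 if k = ip + jq for some 0 ≤ i ≤ ρ and 0 ≤ j ≤ σ; equals -1 if k = 1 + ip + jq for some 0 ≤ i ≤ q-2-ρ and 0 ≤ j ≤ p-2-σ; and equals 0 otherwise. -/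
open Polynomial Finset

lemma aux_divisors {p q : ℕ} (hp : p.Prime) (hq : q.Prime) (hne : p ≠ q) :
    (p * q).divisors = {1, p, q, p * q} := by
  ext d
  simp only [Nat.mem_divisors, Finset.mem_insert, Finset.mem_singleton]
  constructor
  · rintro ⟨hd, -⟩
    obtain ⟨y, z, hy, hz, rfl⟩ := Nat.dvd_mul.mp hd
    rcases (Nat.Prime.eq_one_or_self_of_dvd hp y hy) with rfl | rfl <;>
      rcases (Nat.Prime.eq_one_or_self_of_dvd hq z hz) with rfl | rfl <;> simp
  · have : p * q ≠ 0 := Nat.mul_ne_zero hp.ne_zero hq.ne_zero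
    rintro (rfl | rfl | rfl | rfl) <;>
      exact ⟨by first | exact one_dvd _ | exact Dvd.intro _ rfl | exact Dvd.intro_left _ rfl | rfl, this⟩

lemma aux_geom (p n : ℕ) :
    (∑ i ∈ Finset.range n, (X : ℤ[X]) ^ (i * p)) * (X ^ p - 1) = X ^ (n * p) - 1 := by
  have := geom_sum_mul ((X : ℤ[X]) ^ p) n
  simpa [← pow_mul, mul_comm] using this

lemma aux_coeff {s : Finset (ℕ × ℕ)} {e : ℕ × ℕ → ℕ} (k : ℕ)
    (hinj : ∀ x ∈ s, ∀ y ∈ s, e x = e y → x = y) :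
    (∑ x ∈ s, (X : ℤ[X]) ^ (e x)).coeff k = if ∃ x ∈ s, e x = k then 1 else 0 := by
  rw [finset_sum_coeff]
  simp only [coeff_X_pow]
  split_ifs with hex
  · obtain ⟨x0, hx0, hex0⟩ := hex
    rw [Finset.sum_eq_single_of_mem x0 hx0]
    · simp [hex0]
    · intro b hb hbne
      have : ¬ (k = e b) := fun hk => hbne (hinj b hb x0 hx0 (by omega))
      simp [this]
  · apply Finset.sum_eq_zero
    intro x hx
    have : ¬ (k = e x) := fun hk => hex ⟨x, hx, hk.symm⟩
    simp [this]



lemma aux_inj {p q : ℕ} (hp : p.Prime) (hq : q.Prime) (hne : p ≠ q)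
    {i j i' j' : ℕ} (hj : j < p) (hj' : j' < p)
    (he : i * p + j * q = i' * p + j' * q) : i = i' ∧ j = j' := by
  have hd : (p : ℤ) ∣ ((j : ℤ) - j') * q := ⟨(i' : ℤ) - i, by push_cast at he; linarith⟩
  have hnd : ¬ (p : ℤ) ∣ (q : ℤ) := by
    rw [Int.natCast_dvd_natCast]
    exact fun hdd => hne ((Nat.prime_dvd_prime_iff_eq hp hq).mp hdd)
  have hj0 : (j : ℤ) - j' = 0 := by
    rcases Int.Prime.dvd_mul' hp hd with h1 | h1
    · exact Int.eq_zero_of_abs_lt_dvd h1 (by rw [abs_sub_lt_iff]; omega)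
    · exact absurd h1 hnd
  have hjj : j = j' := by omega
  subst hjj
  refine ⟨Nat.eq_of_mul_eq_mul_right hp.pos (by omega), rfl⟩

theorem cyclotomic_pq_coeff (p q : ℕ) (hp : p.Prime) (hq : q.Prime)
    (hop : Odd p) (hoq : Odd q) (hpq : p < q)
    (ρ σ : ℕ) (h : (p - 1) * (q - 1) = ρ * p + σ * q) (k : ℕ) :
    (cyclotomic (p * q) ℤ).coeff k =
      if ∃ i ≤ ρ, ∃ j ≤ σ, k = i * p + j * q then 1
      else if ∃ i ≤ q - 2 - ρ, ∃ j ≤ p - 2 - σ, k = 1 + i * p + j * q then -1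
      else 0 := by
  have hp2 : 2 ≤ p := hp.two_le
  have hp3 : 3 ≤ p := by rcases hop with ⟨m, hm⟩; omega
  have hq3 : 3 ≤ q := by omega
  have hZ : ((p : ℤ) - 1) * ((q : ℤ) - 1) = ρ * p + σ * q := by
    have := h
    zify [Nat.one_le_iff_ne_zero.mpr hp.ne_zero, Nat.one_le_iff_ne_zero.mpr hq.ne_zero] at this
    linarith [this]
  have hρ2 : ρ + 2 ≤ q := by
    by_contra hc
    push_neg at hc
    have h1' : q ≤ ρ + 1 := by omega
    have h1 : (q : ℤ) ≤ (ρ : ℤ) + 1 := by exact_mod_cast h1'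
    nlinarith [hZ, (by exact_mod_cast hp3 : (3:ℤ) ≤ p), (by exact_mod_cast hq3 : (3:ℤ) ≤ q),
      (Int.natCast_nonneg σ), (Int.natCast_nonneg ρ)]
  have hσ2 : σ + 2 ≤ p := by
    by_contra hc
    push_neg at hc
    have h1' : p ≤ σ + 1 := by omega
    have h1 : (p : ℤ) ≤ (σ : ℤ) + 1 := by exact_mod_cast h1'
    nlinarith [hZ, (by exact_mod_cast hp3 : (3:ℤ) ≤ p), (by exact_mod_cast hq3 : (3:ℤ) ≤ q),
      (Int.natCast_nonneg σ), (Int.natCast_nonneg ρ)]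
  set ρ' := q - 2 - ρ with hρ'def
  set σ' := p - 2 - σ with hσ'def
  have hρ' : (ρ' : ℤ) = q - 2 - ρ := by
    have : ρ' + ρ + 2 = q := by omega
    push_cast [← this]; ring
  have hσ' : (σ' : ℤ) = p - 2 - σ := by
    have : σ' + σ + 2 = p := by omega
    push_cast [← this]; ring
  have e2 : (ρ' + 1) * p + 1 = (σ + 1) * q := by
    have : ((ρ' : ℤ) + 1) * p + 1 = ((σ : ℤ) + 1) * q := by
      rw [hρ']; linear_combination hZ
    exact_mod_cast this
  have e3 : (σ' + 1) * q + 1 = (ρ + 1) * p := by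
    have : ((σ' : ℤ) + 1) * q + 1 = ((ρ : ℤ) + 1) * p := by
      rw [hσ']; linear_combination hZ
    exact_mod_cast this
  have e4 : (ρ' + 1) * p + (σ' + 1) * q + 1 = p * q := by
    have : ((ρ' : ℤ) + 1) * p + ((σ' : ℤ) + 1) * q + 1 = p * q := by
      rw [hρ', hσ']; linear_combination hZ
    exact_mod_cast this
  -- polynomial identity
  have fp : Fact p.Prime := ⟨hp⟩
  have fq : Fact q.Prime := ⟨hq⟩
  set A : ℤ[X] := ∑ i ∈ Finset.range (ρ + 1), X ^ (i * p) with hA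
  set B : ℤ[X] := ∑ j ∈ Finset.range (σ + 1), X ^ (j * q) with hB
  set C : ℤ[X] := ∑ i ∈ Finset.range (ρ' + 1), X ^ (i * p) with hC
  set D : ℤ[X] := ∑ j ∈ Finset.range (σ' + 1), X ^ (j * q) with hD
  have hg : ((X : ℤ[X]) ^ p - 1) * ((X : ℤ[X]) ^ q - 1) ≠ 0 := by
    apply mul_ne_zero
    · simpa using (monic_X_pow_sub_C (1 : ℤ) hp.ne_zero).ne_zero
    · simpa using (monic_X_pow_sub_C (1 : ℤ) hq.ne_zero).ne_zero
  have hq2 : q < p * q := by nlinarith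
  have hp2' : p < p * q := by nlinarith
  have hprod : cyclotomic 1 ℤ * (cyclotomic p ℤ * (cyclotomic q ℤ * cyclotomic (p * q) ℤ))
      = X ^ (p * q) - 1 := by
    have hpos : 0 < p * q := by positivity
    have := prod_cyclotomic_eq_X_pow_sub_one hpos ℤ
    rw [aux_divisors hp hq (by omega)] at this
    rw [show ({1, p, q, p * q} : Finset ℕ) = insert 1 (insert p (insert q {p * q})) from rfl,
      Finset.prod_insert (by simp; omega), Finset.prod_insert (by simp; omega),
      Finset.prod_insert (by simp; omega), Finset.prod_singleton] at this
    exact this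
  have key : A * B - X * C * D = cyclotomic (p * q) ℤ := by
    apply mul_right_cancel₀ hg
    have lhs : (A * B - X * C * D) * (((X : ℤ[X]) ^ p - 1) * ((X : ℤ[X]) ^ q - 1))
        = ((X : ℤ[X]) ^ (p * q) - 1) * (X - 1) := by
      calc (A * B - X * C * D) * (((X : ℤ[X]) ^ p - 1) * ((X : ℤ[X]) ^ q - 1))
          = (A * ((X:ℤ[X]) ^ p - 1)) * (B * ((X:ℤ[X]) ^ q - 1))
            - X * ((C * ((X:ℤ[X]) ^ p - 1)) * (D * ((X:ℤ[X]) ^ q - 1))) := by ring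
        _ = ((X:ℤ[X]) ^ ((ρ+1)*p) - 1) * ((X:ℤ[X]) ^ ((σ+1)*q) - 1)
            - X * (((X:ℤ[X]) ^ ((ρ'+1)*p) - 1) * ((X:ℤ[X]) ^ ((σ'+1)*q) - 1)) := by
              rw [hA, hB, hC, hD, aux_geom, aux_geom, aux_geom, aux_geom]
        _ = ((X : ℤ[X]) ^ (p * q) - 1) * (X - 1) := by
              rw [← e3, ← e2, ← e4]; ring
    rw [lhs]
    have rhs : cyclotomic (p * q) ℤ * (((X : ℤ[X]) ^ p - 1) * ((X : ℤ[X]) ^ q - 1))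
        = ((X : ℤ[X]) ^ (p * q) - 1) * (X - 1) := by
      rw [← cyclotomic_prime_mul_X_sub_one ℤ p, ← cyclotomic_prime_mul_X_sub_one ℤ q, ← hprod,
        cyclotomic_one]
      ring
    rw [rhs]
  -- sums as indexed monomial sums
  have hABsum : A * B = ∑ x ∈ Finset.range (ρ + 1) ×ˢ Finset.range (σ + 1),
      (X : ℤ[X]) ^ (x.1 * p + x.2 * q) := by
    rw [hA, hB, Finset.sum_mul_sum, Finset.sum_product]
    simp [pow_add]
  have hCDsum : X * C * D = ∑ x ∈ Finset.range (ρ' + 1) ×ˢ Finset.range (σ' + 1),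
      (X : ℤ[X]) ^ (1 + x.1 * p + x.2 * q) := by
    rw [hC, hD, mul_assoc, Finset.sum_mul_sum, Finset.mul_sum, Finset.sum_product]
    simp [pow_add, pow_one, Finset.mul_sum, mul_assoc]
  have hndqp : ¬ (q : ℤ) ∣ (p : ℤ) := by
    rw [Int.natCast_dvd_natCast]
    exact fun hdd => (by omega : q ≠ p) ((Nat.prime_dvd_prime_iff_eq hq hp).mp hdd)
  have inj1 : ∀ x ∈ Finset.range (ρ + 1) ×ˢ Finset.range (σ + 1),
      ∀ y ∈ Finset.range (ρ + 1) ×ˢ Finset.range (σ + 1),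
      x.1 * p + x.2 * q = y.1 * p + y.2 * q → x = y := by
    rintro ⟨i, j⟩ hx ⟨i', j'⟩ hy he
    simp only [Finset.mem_product, Finset.mem_range] at hx hy
    have := aux_inj hp hq (by omega) (by omega : j < p) (by omega : j' < p) he
    exact Prod.ext this.1 this.2
  have inj2 : ∀ x ∈ Finset.range (ρ' + 1) ×ˢ Finset.range (σ' + 1),
      ∀ y ∈ Finset.range (ρ' + 1) ×ˢ Finset.range (σ' + 1),
      1 + x.1 * p + x.2 * q = 1 + y.1 * p + y.2 * q → x = y := by
    rintro ⟨i, j⟩ hx ⟨i', j'⟩ hy he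
    simp only [Finset.mem_product, Finset.mem_range] at hx hy
    rw [add_assoc, add_assoc] at he
    have he' : i * p + j * q = i' * p + j' * q := Nat.add_left_cancel he
    have := aux_inj hp hq (by omega) (by omega : j < p) (by omega : j' < p) he'
    exact Prod.ext this.1 this.2
  have hdisj : ∀ i ≤ ρ, ∀ j ≤ σ, ∀ i' ≤ ρ', ∀ j' ≤ σ',
      i * p + j * q ≠ 1 + i' * p + j' * q := by
    intro i hi j hj i' hi' j' hj' he
    have heZ : (i : ℤ) * p + j * q = 1 + i' * p + j' * q := by exact_mod_cast he
    have e2Z : ((ρ' : ℤ) + 1) * p + 1 = ((σ : ℤ) + 1) * q := by exact_mod_cast e2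
    have hqd : (q : ℤ) ∣ ((i : ℤ) - i' + ρ' + 1) * p :=
      ⟨(σ : ℤ) + 1 + j' - j, by linear_combination heZ + e2Z⟩
    have hqd' : (q : ℤ) ∣ ((i : ℤ) - i' + ρ' + 1) := by
      rcases Int.Prime.dvd_mul' hq hqd with h1 | h1
      · exact h1
      · exact absurd h1 hndqp
    have hle := Int.le_of_dvd (by omega) hqd'
    omega
  rw [← key, hABsum, hCDsum, Polynomial.coeff_sub, aux_coeff k inj1, aux_coeff k inj2]
  have hP : (∃ x ∈ Finset.range (ρ + 1) ×ˢ Finset.range (σ + 1), x.1 * p + x.2 * q = k)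
      ↔ ∃ i ≤ ρ, ∃ j ≤ σ, k = i * p + j * q := by
    constructor
    · rintro ⟨⟨i, j⟩, hx, he⟩
      simp only [Finset.mem_product, Finset.mem_range] at hx
      exact ⟨i, by omega, j, by omega, he.symm⟩
    · rintro ⟨i, hi, j, hj, rfl⟩
      exact ⟨(i, j), by simp only [Finset.mem_product, Finset.mem_range]; omega, rfl⟩
  have hQ : (∃ x ∈ Finset.range (ρ' + 1) ×ˢ Finset.range (σ' + 1), 1 + x.1 * p + x.2 * q = k)
      ↔ ∃ i ≤ ρ', ∃ j ≤ σ', k = 1 + i * p + j * q := by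
    constructor
    · rintro ⟨⟨i, j⟩, hx, he⟩
      simp only [Finset.mem_product, Finset.mem_range] at hx
      exact ⟨i, by omega, j, by omega, he.symm⟩
    · rintro ⟨i, hi, j, hj, rfl⟩
      exact ⟨(i, j), by simp only [Finset.mem_product, Finset.mem_range]; omega, rfl⟩
  simp only [hP, hQ]
  by_cases hPP : ∃ i ≤ ρ, ∃ j ≤ σ, k = i * p + j * q
  · have hnQ : ¬ ∃ i ≤ ρ', ∃ j ≤ σ', k = 1 + i * p + j * q := by
      rintro ⟨i', hi', j', hj', rfl⟩
      obtain ⟨i, hi, j, hj, he⟩ := hPP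
      exact hdisj i hi j hj i' hi' j' hj' he.symm
    simp [hPP, hnQ]
  · by_cases hQQ : ∃ i ≤ ρ', ∃ j ≤ σ', k = 1 + i * p + j * q <;> simp [hPP, hQQ]
end

section
/- For distinct odd primes p < q < r, the height of Ψ_{pqr}(x) (the maximum absolute value of its coefficients) is at most ⌊(p-1)(q-1)/r⌋ + 1, and in particular at most p - 1. -/
open Polynomial Finset

private lemma geom_aux (t m : ℕ) :
    (∑ i ∈ range m, (X : ℤ[X]) ^ (t * i)) * (X ^ t - 1) = X ^ (t * m) - 1 := by
  have h := geom_sum_mul ((X : ℤ[X]) ^ t) m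
  simpa [← pow_mul] using h

private lemma key_pq (p q : ℕ) (hp : p.Prime) (hq : q.Prime) (hqp : ¬ q ∣ p) :
    cyclotomic (p*q) ℤ * ((X ^ p - 1) * (X ^ q - 1)) = (X ^ (p*q) - 1) * (X - 1) := by
  have : Fact p.Prime := ⟨hp⟩
  have h1 : cyclotomic p ℤ * (X - 1) = X ^ p - 1 := cyclotomic_prime_mul_X_sub_one ℤ p
  have h2 : expand ℤ q (cyclotomic p ℤ) = cyclotomic (p*q) ℤ * cyclotomic p ℤ :=
    cyclotomic_expand_eq_cyclotomic_mul hq hqp ℤ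
  have h3 := congrArg (expand ℤ q) h1
  rw [map_mul, map_sub, map_one, map_sub, map_one, map_pow, expand_X, h2, ← pow_mul,
    mul_comm q p] at h3
  -- h3 : cyclotomic (p*q) ℤ * cyclotomic p ℤ * (X^q - 1) = X^(p*q) - 1
  rw [← h1]
  linear_combination (X - 1 : ℤ[X]) * h3

private lemma g_coeff_bound (p q : ℕ) (hp : p.Prime) (hq : q.Prime) (hne : p ≠ q) (n : ℕ) :
    0 ≤ ((∑ i ∈ range q, (X : ℤ[X]) ^ (p*i)) * ∑ j ∈ range p, (X : ℤ[X]) ^ (q*j)).coeff n ∧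
    ((∑ i ∈ range q, (X : ℤ[X]) ^ (p*i)) * ∑ j ∈ range p, (X : ℤ[X]) ^ (q*j)).coeff n ≤ 1 := by
  have cop : IsCoprime (p : ℤ) (q : ℤ) :=
    Nat.isCoprime_iff_coprime.mpr ((Nat.coprime_primes hp hq).mpr hne)
  have hg : (∑ i ∈ range q, (X : ℤ[X]) ^ (p*i)) * ∑ j ∈ range p, (X : ℤ[X]) ^ (q*j)
      = ∑ x ∈ range q ×ˢ range p, X ^ (p*x.1 + q*x.2) := by
    rw [Finset.sum_mul_sum, ← Finset.sum_product']
    exact Finset.sum_congr rfl fun x _ => (pow_add _ _ _).symm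
  have hcoeff : ((∑ i ∈ range q, (X : ℤ[X]) ^ (p*i)) * ∑ j ∈ range p, (X : ℤ[X]) ^ (q*j)).coeff n
      = ((range q ×ˢ range p).filter (fun x => n = p*x.1 + q*x.2)).card := by
    rw [hg, finset_sum_coeff]
    simp only [coeff_X_pow]
    rw [Finset.sum_boole]
  rw [hcoeff]
  refine ⟨by positivity, ?_⟩
  have : ((range q ×ˢ range p).filter (fun x => n = p*x.1 + q*x.2)).card ≤ 1 := by
    rw [Finset.card_le_one]
    rintro ⟨i, j⟩ hij ⟨i', j'⟩ hij'
    simp only [Finset.mem_filter, Finset.mem_product, Finset.mem_range] at hij hij'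
    obtain ⟨⟨hi, hj⟩, he⟩ := hij
    obtain ⟨⟨hi', hj'⟩, he'⟩ := hij'
    have heq : (p : ℤ) * i + q * j = p * i' + q * j' := by
      have := he.symm.trans he'
      exact_mod_cast this
    have hdvd : (q : ℤ) ∣ ((i : ℤ) - i') := by
      have h1 : (q : ℤ) ∣ (p : ℤ) * ((i : ℤ) - i') := ⟨(j' : ℤ) - j, by linarith⟩
      exact (cop.symm.dvd_of_dvd_mul_left h1)
    have hii : (i : ℤ) = i' := by
      have habs : |(i : ℤ) - i'| < q := by
        rw [abs_sub_lt_iff]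
        constructor <;> omega
      have := Int.eq_zero_of_abs_lt_dvd hdvd habs
      linarith
    have hi2 : i = i' := by exact_mod_cast hii
    subst hi2
    have : j = j' := by
      have hq0 : 0 < q := hq.pos
      have : (q : ℤ) * j = q * j' := by linarith
      have : (j : ℤ) = j' := by
        have hq0' : (q : ℤ) ≠ 0 := by exact_mod_cast hq0.ne'
        exact mul_left_cancel₀ hq0' this
      exact_mod_cast this
    simp [this]
  exact_mod_cast this

private lemma abs_coeff_cyclotomic_pq (p q : ℕ) (hp : p.Prime) (hq : q.Prime) (hpq : p < q)
    (n : ℕ) : |(cyclotomic (p*q) ℤ).coeff n| ≤ 1 := by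
  have hqp : ¬ q ∣ p := fun h => absurd (Nat.le_of_dvd hp.pos h) (not_le.mpr hpq)
  have key := key_pq p q hp hq hqp
  set g : ℤ[X] := (∑ i ∈ range q, (X : ℤ[X]) ^ (p*i)) * ∑ j ∈ range p, (X : ℤ[X]) ^ (q*j)
    with hgdef
  have h1 := geom_aux p q
  have h2 := geom_aux q p
  rw [show q * p = p * q from mul_comm q p] at h2
  have hBne : (X ^ (p*q) - 1 : ℤ[X]) ≠ 0 := by
    intro h
    have h0 := congrArg (eval 0) h
    have hpq0 : p * q ≠ 0 := Nat.mul_ne_zero hp.ne_zero hq.ne_zero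
    simp [zero_pow hpq0] at h0
  have key2 : cyclotomic (p*q) ℤ * (X ^ (p*q) - 1) = (X - 1) * g := by
    apply mul_right_cancel₀ hBne
    rw [hgdef]
    linear_combination ((∑ i ∈ range q, (X:ℤ[X]) ^ (p*i)) * ∑ j ∈ range p, (X:ℤ[X]) ^ (q*j)) * key
      - (cyclotomic (p*q) ℤ * (X ^ (p*q) - 1)) * h2
      - (cyclotomic (p*q) ℤ * ((∑ j ∈ range p, (X:ℤ[X]) ^ (q*j)) * (X ^ q - 1))) * h1
  by_cases hn : p * q ≤ n
  · have hdeg : (cyclotomic (p*q) ℤ).natDegree < n := by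
      rw [natDegree_cyclotomic]
      have := Nat.totient_lt (p*q) (one_lt_mul_of_lt_of_le hp.one_lt hq.one_le)
      omega
    rw [coeff_eq_zero_of_natDegree_lt hdeg]
    simp
  · have key3 : cyclotomic (p*q) ℤ * X ^ (p*q) - cyclotomic (p*q) ℤ = g * X ^ 1 - g := by
      linear_combination key2
    have hc := congrArg (fun f => coeff f n) key3
    simp only [coeff_sub, coeff_mul_X_pow'] at hc
    rw [if_neg hn] at hc
    have hb1 := g_coeff_bound p q hp hq hpq.ne n
    rw [← hgdef] at hb1
    by_cases h1n : 1 ≤ n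
    · rw [if_pos h1n] at hc
      have hb2 := g_coeff_bound p q hp hq hpq.ne (n - 1)
      rw [← hgdef] at hb2
      rw [abs_le]
      omega
    · rw [if_neg h1n] at hc
      rw [abs_le]
      omega

private lemma psi_eq (p q r : ℕ) (hp : p.Prime) (hq : q.Prime) (hr : r.Prime)
    (hpq : p < q) (hqr : q < r) :
    Psi (p*q*r) = cyclotomic (p*q) ℤ * ((X ^ (p*r) - 1) * ∑ i ∈ range q, X ^ (r*i)) := by
  have hqp : ¬ q ∣ p := fun h => absurd (Nat.le_of_dvd hp.pos h) (not_le.mpr hpq)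
  have hrpq : ¬ r ∣ p * q := by
    intro h
    rcases (Nat.Prime.dvd_mul hr).mp h with h' | h'
    · exact absurd (Nat.le_of_dvd hp.pos h') (by omega)
    · exact absurd (Nat.le_of_dvd hq.pos h') (by omega)
  have key := key_pq p q hp hq hqp
  have h2 : expand ℤ r (cyclotomic (p*q) ℤ) = cyclotomic (p*q*r) ℤ * cyclotomic (p*q) ℤ :=
    cyclotomic_expand_eq_cyclotomic_mul hr hrpq ℤ
  have E := congrArg (expand ℤ r) key
  simp only [map_mul, map_sub, map_one, map_pow, expand_X, h2, ← pow_mul] at E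
  have G := geom_aux r q
  rw [show r * q = q * r from mul_comm r q] at G
  have hrne : (X ^ r - 1 : ℤ[X]) ≠ 0 := by
    intro h
    have h0 := congrArg (eval 0) h
    simp [zero_pow hr.ne_zero] at h0
  have C : cyclotomic (p*q*r) ℤ *
      (cyclotomic (p*q) ℤ * ((X ^ (p*r) - 1) * ∑ i ∈ range q, X ^ (r*i)))
      = X ^ (p*q*r) - 1 := by
    apply mul_right_cancel₀ hrne
    linear_combination E + (cyclotomic (p*q*r) ℤ * cyclotomic (p*q) ℤ * (X ^ (p*r) - 1)) * G
  rw [Psi, ← C, mul_divByMonic_cancel_left _ (cyclotomic.monic _ ℤ)]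

theorem psi_three_primes_height (p q r : ℕ) (hp : p.Prime) (hq : q.Prime) (hr : r.Prime)
    (hop : Odd p) (hoq : Odd q) (hor : Odd r) (hpq : p < q) (hqr : q < r) (k : ℕ) :
    |(Psi (p * q * r)).coeff k| ≤ ((p - 1) * (q - 1) / r + 1 : ℕ) ∧
      |(Psi (p * q * r)).coeff k| ≤ (p : ℤ) - 1 := by
  have hrpos : 0 < r := hr.pos
  obtain ⟨M, hM⟩ : ∃ x, x = k / r := ⟨_, rfl⟩
  obtain ⟨E, hE⟩ : ∃ x, x = (p - 1) * (q - 1) / r := ⟨_, rfl⟩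
  set Φ : ℤ[X] := cyclotomic (p*q) ℤ with hΦ
  have habs : ∀ n, |Φ.coeff n| ≤ 1 := abs_coeff_cyclotomic_pq p q hp hq hpq
  have hdeg : ∀ n, (p - 1) * (q - 1) < n → Φ.coeff n = 0 := by
    intro n hn
    apply coeff_eq_zero_of_natDegree_lt
    rw [hΦ, natDegree_cyclotomic, Nat.totient_mul ((Nat.coprime_primes hp hq).mpr hpq.ne),
      Nat.totient_prime hp, Nat.totient_prime hq]
    omega
  -- rewrite Psi as a difference of sums of shifted copies of Φ
  have hsplit : (X ^ (p*r) - 1 : ℤ[X]) * ∑ i ∈ range q, X ^ (r*i)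
      = ∑ i ∈ Ico q (p+q), X ^ (r*i) - ∑ i ∈ range p, X ^ (r*i) := by
    have e1 : (X ^ (p*r) - 1 : ℤ[X]) * ∑ i ∈ range q, X ^ (r*i)
        = ∑ i ∈ range q, X ^ (r*(p+i)) - ∑ i ∈ range q, X ^ (r*i) := by
      rw [sub_mul, one_mul, Finset.mul_sum]
      congr 1
      refine Finset.sum_congr rfl fun i _ => ?_
      rw [← pow_add, show p*r + r*i = r*(p+i) by ring]
    have e2 : ∑ i ∈ range q, (X : ℤ[X]) ^ (r*(p+i)) = ∑ i ∈ Ico p (p+q), X ^ (r*i) := by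
      rw [Finset.sum_Ico_eq_sum_range]
      simp
    have e3 := Finset.sum_Ico_consecutive (fun i => (X : ℤ[X]) ^ (r*i)) hpq.le
      (Nat.le_add_left q p)
    have e4 : ∑ i ∈ range q, (X : ℤ[X]) ^ (r*i)
        = ∑ i ∈ range p, (X : ℤ[X]) ^ (r*i) + ∑ i ∈ Ico p q, (X : ℤ[X]) ^ (r*i) := by
      rw [Finset.range_eq_Ico, Finset.range_eq_Ico]
      exact (Finset.sum_Ico_consecutive (fun i => (X : ℤ[X]) ^ (r*i)) (Nat.zero_le p)
        hpq.le).symm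
    rw [e1, e2, ← e3, e4]
    abel
  have hck : (Psi (p*q*r)).coeff k
      = ∑ i ∈ Ico q (p+q), (Φ * X ^ (r*i)).coeff k - ∑ i ∈ range p, (Φ * X ^ (r*i)).coeff k := by
    rw [psi_eq p q r hp hq hr hpq hqr, hsplit, mul_sub, Finset.mul_sum, Finset.mul_sum,
      coeff_sub, finset_sum_coeff, finset_sum_coeff]
  -- bound each term by an indicator
  have hterm : ∀ i, |(Φ * X ^ (r*i)).coeff k|
      ≤ if r*i ≤ k ∧ k - r*i ≤ (p - 1) * (q - 1) then (1 : ℤ) else 0 := by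
    intro i
    rw [coeff_mul_X_pow']
    by_cases h1 : r*i ≤ k
    · by_cases h2 : k - r*i ≤ (p - 1) * (q - 1)
      · rw [if_pos h1, if_pos ⟨h1, h2⟩]
        exact habs _
      · rw [if_pos h1, if_neg (by tauto), hdeg _ (by omega), abs_zero]
    · rw [if_neg h1, if_neg (by tauto), abs_zero]
  -- counting lemma
  have hcard : ∀ s : Finset ℕ,
      (s.filter fun i => r*i ≤ k ∧ k - r*i ≤ (p - 1) * (q - 1)).card ≤ E + 1 := by
    intro s
    have hsub : (s.filter fun i => r*i ≤ k ∧ k - r*i ≤ (p - 1) * (q - 1))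
        ⊆ Finset.Icc (M - E) M := by
      intro i hi
      simp only [Finset.mem_filter] at hi
      obtain ⟨-, h1, h2⟩ := hi
      have h1' : i * r ≤ k := by rwa [mul_comm]
      have hiM : i ≤ M := by rw [hM]; exact (Nat.le_div_iff_mul_le hrpos).mpr h1'
      have h3 : (M - i) * r ≤ (p - 1) * (q - 1) := by
        calc (M - i) * r = M * r - i * r := Nat.sub_mul M i r
          _ ≤ k - i * r := by
              refine Nat.sub_le_sub_right ?_ _
              rw [hM]; exact Nat.div_mul_le_self k r
          _ ≤ (p - 1) * (q - 1) := by rw [mul_comm i r]; exact h2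
      have h4 : M - i ≤ E := by rw [hE]; exact (Nat.le_div_iff_mul_le hrpos).mpr h3
      simp only [Finset.mem_Icc]
      omega
    refine le_trans (Finset.card_le_card hsub) ?_
    rw [Nat.card_Icc]
    omega
  -- the disjoint union
  have hdisj : Disjoint (range p) (Ico q (p+q)) := by
    rw [Finset.disjoint_left]
    intro i hi hi'
    simp only [Finset.mem_range] at hi
    simp only [Finset.mem_Ico] at hi'
    omega
  have hbound : |(Psi (p*q*r)).coeff k| ≤ ((E + 1 : ℕ) : ℤ) := by
    have step1 : |(Psi (p*q*r)).coeff k|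
        ≤ ∑ i ∈ range p ∪ Ico q (p+q), |(Φ * X ^ (r*i)).coeff k| := by
      rw [hck, Finset.sum_union hdisj]
      refine (abs_sub _ _).trans ?_
      refine le_of_le_of_eq (add_le_add (Finset.abs_sum_le_sum_abs _ _)
        (Finset.abs_sum_le_sum_abs _ _)) (add_comm _ _)
    refine step1.trans ?_
    have step2 : ∑ i ∈ range p ∪ Ico q (p+q), |(Φ * X ^ (r*i)).coeff k|
        ≤ ∑ i ∈ range p ∪ Ico q (p+q),
            (if r*i ≤ k ∧ k - r*i ≤ (p - 1) * (q - 1) then (1:ℤ) else 0) :=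
      Finset.sum_le_sum fun i _ => hterm i
    refine step2.trans ?_
    rw [Finset.sum_boole]
    exact_mod_cast hcard _
  have hNp : E + 1 ≤ p - 1 := by
    have hp2 : p % 2 = 1 := Nat.odd_iff.mp hop
    have hp3 : 3 ≤ p := by have := hp.two_le; omega
    have hlt : (p - 1) * (q - 1) < (p - 1) * r :=
      mul_lt_mul_of_pos_left (by omega) (by omega)
    have hdiv : (p - 1) * (q - 1) / r < p - 1 := (Nat.div_lt_iff_lt_mul hrpos).mpr hlt
    omega
  constructor
  · rw [← hE]
    exact hbound
  · refine hbound.trans ?_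
    have h1 : ((E + 1 : ℕ) : ℤ) ≤ ((p - 1 : ℕ) : ℤ) := by exact_mod_cast hNp
    refine h1.trans ?_
    have := hp.one_le
    omega
end

section
/- Let p < q < r be distinct primes with r > (p-1)(q-1). Then Ψ_{pqr}(x) is flat, i.e., all coefficients of Ψ_{pqr}(x) lie in {-1, 0, 1}. -/
open Polynomial

lemma Psi_mul_cyclotomic {n : ℕ} (hn : 0 < n) :
    Psi n * cyclotomic n ℤ = X ^ n - 1 := by
  have hmonic : (cyclotomic n ℤ).Monic := cyclotomic.monic n ℤ
  have hdvd : cyclotomic n ℤ ∣ (X : ℤ[X]) ^ n - 1 := cyclotomic.dvd_X_pow_sub_one n ℤ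
  have h0 : ((X : ℤ[X]) ^ n - 1) %ₘ cyclotomic n ℤ = 0 :=
    (modByMonic_eq_zero_iff_dvd hmonic).2 hdvd
  have h := modByMonic_add_div ((X : ℤ[X]) ^ n - 1) (cyclotomic n ℤ)
  rw [h0, zero_add] at h
  rw [Psi, mul_comm]
  exact h

lemma Psi_eq {n : ℕ} (hn : 0 < n) (P : ℤ[X]) (h : P * cyclotomic n ℤ = X ^ n - 1) :
    Psi n = P := by
  have h2 := Psi_mul_cyclotomic hn
  have hne : cyclotomic n ℤ ≠ 0 := (cyclotomic.monic n ℤ).ne_zero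
  exact mul_right_cancel₀ hne (by rw [h, h2])

/-- `Φ_p * (X - 1) = X^p - 1` for `p` prime. -/
lemma cyclotomic_prime_mul {p : ℕ} (hp : p.Prime) :
    cyclotomic p ℤ * (X - 1) = X ^ p - 1 := by
  haveI : Fact p.Prime := ⟨hp⟩
  rw [cyclotomic_prime ℤ p]
  exact geom_sum_mul X p

/-- key product identity: `Φ_{pq} * (X^p-1) * (X^q-1) = (X^{pq}-1)(X-1)`. -/
lemma cyclotomic_mul_key {p q : ℕ} (hp : p.Prime) (hq : q.Prime) (hpq : p ≠ q) :
    cyclotomic (p * q) ℤ * ((X ^ p - 1) * (X ^ q - 1)) =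
      ((X : ℤ[X]) ^ (p * q) - 1) * (X - 1) := by
  have hnd : ¬ q ∣ p := by
    intro h
    exact hpq ((Nat.prime_dvd_prime_iff_eq hq hp).1 h).symm
  have hexp := cyclotomic_expand_eq_cyclotomic_mul hq hnd (R := ℤ)
  -- expand ℤ q (cyclotomic p ℤ) = cyclotomic (p*q) ℤ * cyclotomic p ℤ
  have hbase := cyclotomic_prime_mul hp
  have h2 := congrArg (expand ℤ q) hbase
  simp only [map_mul, map_sub, map_pow, expand_X, map_one] at h2
  rw [hexp] at h2
  -- h2 : cyclotomic (p*q) ℤ * cyclotomic p ℤ * ((X^q) - 1) = (X^q)^p - 1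
  have h3 := congrArg (· * ((X : ℤ[X]) - 1)) h2
  calc cyclotomic (p * q) ℤ * ((X ^ p - 1) * (X ^ q - 1))
      = cyclotomic (p * q) ℤ * ((cyclotomic p ℤ * (X - 1)) * (X ^ q - 1)) := by rw [hbase]
    _ = cyclotomic (p * q) ℤ * cyclotomic p ℤ * (X ^ q - 1) * (X - 1) := by ring
    _ = ((X ^ q) ^ p - 1) * (X - 1) := h3
    _ = ((X : ℤ[X]) ^ (p * q) - 1) * (X - 1) := by rw [← pow_mul, mul_comm q p]

lemma Psi_pq {p q : ℕ} (hp : p.Prime) (hq : q.Prime) (hpq : p ≠ q) :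
    Psi (p * q) = (X ^ p - 1) * ∑ i ∈ Finset.range q, (X : ℤ[X]) ^ i := by
  have hpos : 0 < p * q := Nat.mul_pos hp.pos hq.pos
  apply Psi_eq hpos
  have hkey := cyclotomic_mul_key hp hq hpq
  have hgs : (∑ i ∈ Finset.range q, (X : ℤ[X]) ^ i) * (X - 1) = X ^ q - 1 := geom_sum_mul X q
  have hX1 : ((X : ℤ[X]) - 1) ≠ 0 := by
    simpa using X_sub_C_ne_zero (1 : ℤ)
  apply mul_right_cancel₀ hX1
  calc (X ^ p - 1) * (∑ i ∈ Finset.range q, (X : ℤ[X]) ^ i) * cyclotomic (p * q) ℤ * (X - 1)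
      = cyclotomic (p * q) ℤ * ((X ^ p - 1) * ((∑ i ∈ Finset.range q, (X : ℤ[X]) ^ i) * (X - 1))) := by
        ring
    _ = cyclotomic (p * q) ℤ * ((X ^ p - 1) * (X ^ q - 1)) := by rw [hgs]
    _ = ((X : ℤ[X]) ^ (p * q) - 1) * (X - 1) := hkey

/-- Ψ_{pqr} = Φ_{pq} * Ψ_{pq}(X^r). -/
lemma Psi_pqr {p q r : ℕ} (hp : p.Prime) (hq : q.Prime) (hr : r.Prime)
    (hrp : r ≠ p) (hrq : r ≠ q) :
    Psi (p * q * r) = cyclotomic (p * q) ℤ * expand ℤ r (Psi (p * q)) := by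
  have hpqpos : 0 < p * q := Nat.mul_pos hp.pos hq.pos
  have hpos : 0 < p * q * r := Nat.mul_pos hpqpos hr.pos
  apply Psi_eq hpos
  have hnd : ¬ r ∣ p * q := by
    intro h
    rcases (Nat.Prime.dvd_mul hr).1 h with h1 | h1
    · exact hrp ((Nat.prime_dvd_prime_iff_eq hr hp).1 h1)
    · exact hrq ((Nat.prime_dvd_prime_iff_eq hr hq).1 h1)
  have hexp := cyclotomic_expand_eq_cyclotomic_mul hr hnd (R := ℤ)
  have hbase := Psi_mul_cyclotomic hpqpos
  have h2 := congrArg (expand ℤ r) hbase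
  rw [map_mul, map_sub, map_pow, expand_X, map_one] at h2
  calc cyclotomic (p * q) ℤ * expand ℤ r (Psi (p * q)) * cyclotomic (p * q * r) ℤ
      = expand ℤ r (Psi (p * q)) * (cyclotomic (p * q * r) ℤ * cyclotomic (p * q) ℤ) := by ring
    _ = expand ℤ r (Psi (p * q)) * expand ℤ r (cyclotomic (p * q) ℤ) := by rw [hexp]
    _ = (X ^ r) ^ (p * q) - 1 := h2
    _ = X ^ (p * q * r) - 1 := by rw [← pow_mul, mul_comm r (p * q)]

/-- Geometric-type power series `Σ_{p ∣ n} X^n`. -/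
noncomputable def Gser (p : ℕ) : PowerSeries ℤ :=
  PowerSeries.mk fun n => if p ∣ n then 1 else 0

lemma Gser_mul {p : ℕ} (hp : 0 < p) :
    ((PowerSeries.X : PowerSeries ℤ) ^ p - 1) * Gser p = -1 := by
  ext n
  rw [sub_mul, one_mul, map_sub, PowerSeries.coeff_X_pow_mul']
  simp only [map_neg, PowerSeries.coeff_one, Gser, PowerSeries.coeff_mk]
  have hiff : p ≤ n → (p ∣ n - p ↔ p ∣ n) := by
    intro h
    constructor
    · intro hd
      have := Nat.dvd_add hd (dvd_refl p)
      rwa [Nat.sub_add_cancel h] at this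
    · intro hd
      exact Nat.dvd_sub hd dvd_rfl
  by_cases ha : p ≤ n
  · rw [if_pos ha]
    have hne : ¬ n = 0 := by omega
    rw [if_neg hne]
    by_cases hb : p ∣ n
    · rw [if_pos ((hiff ha).2 hb), if_pos hb]; ring
    · rw [if_neg (fun h => hb ((hiff ha).1 h)), if_neg hb]; ring
  · rw [if_neg ha]
    by_cases hn0 : n = 0
    · subst hn0
      rw [if_pos (dvd_zero p), if_pos rfl]; ring
    · have hb : ¬ p ∣ n := fun h => hn0 (Nat.eq_zero_of_dvd_of_lt h (by omega))
      rw [if_neg hb, if_neg hn0]; ring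

/-- Φ_{pq} as a power series. -/
lemma cyclotomic_coe {p q : ℕ} (hp : p.Prime) (hq : q.Prime) (hpq : p ≠ q) :
    ((cyclotomic (p * q) ℤ : ℤ[X]) : PowerSeries ℤ) =
      ((PowerSeries.X : PowerSeries ℤ) ^ (p * q) - 1) * (PowerSeries.X - 1) *
        (Gser p * Gser q) := by
  have hkey := cyclotomic_mul_key hp hq hpq
  have hcast := congrArg (fun f : ℤ[X] => (f : PowerSeries ℤ)) hkey
  simp only [Polynomial.coe_mul, Polynomial.coe_sub, Polynomial.coe_pow, Polynomial.coe_one,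
    Polynomial.coe_X] at hcast
  have hgp := Gser_mul hp.pos
  have hgq := Gser_mul hq.pos
  have h2 := congrArg (fun f => f * (Gser p * Gser q)) hcast
  calc ((cyclotomic (p * q) ℤ : ℤ[X]) : PowerSeries ℤ)
      = ((cyclotomic (p * q) ℤ : ℤ[X]) : PowerSeries ℤ) *
          (((PowerSeries.X ^ p - 1) * Gser p) * ((PowerSeries.X ^ q - 1) * Gser q)) := by
        rw [hgp, hgq]; ring
    _ = ((cyclotomic (p * q) ℤ : ℤ[X]) : PowerSeries ℤ) *
          ((PowerSeries.X ^ p - 1) * (PowerSeries.X ^ q - 1)) * (Gser p * Gser q) := by ring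
    _ = ((PowerSeries.X : PowerSeries ℤ) ^ (p * q) - 1) * (PowerSeries.X - 1) *
        (Gser p * Gser q) := h2

lemma Gmul_coeff_nonneg (p q n : ℕ) :
    0 ≤ PowerSeries.coeff n (Gser p * Gser q) := by
  rw [PowerSeries.coeff_mul]
  apply Finset.sum_nonneg
  intro x _
  simp only [Gser, PowerSeries.coeff_mk]
  split_ifs <;> norm_num

lemma Gmul_coeff_le_one {p q n : ℕ} (hp : p.Prime) (hq : q.Prime) (hpq : p ≠ q)
    (hn : n < p * q) :
    PowerSeries.coeff n (Gser p * Gser q) ≤ 1 := by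
  rw [PowerSeries.coeff_mul]
  have : ∀ x ∈ Finset.HasAntidiagonal.antidiagonal n,
      (PowerSeries.coeff x.1 (Gser p)) * (PowerSeries.coeff x.2 (Gser q)) =
        if p ∣ x.1 ∧ q ∣ x.2 then 1 else 0 := by
    intro x _
    simp only [Gser, PowerSeries.coeff_mk]
    split_ifs with h1 h2 h3 h4 <;> simp_all <;> try ring
  rw [Finset.sum_congr rfl this, Finset.sum_boole]
  norm_cast
  rw [Finset.card_le_one]
  rintro ⟨i1, j1⟩ h1 ⟨i2, j2⟩ h2
  simp only [Finset.mem_filter, Finset.HasAntidiagonal.mem_antidiagonal] at h1 h2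
  obtain ⟨hij1, hp1, hq1⟩ := h1
  obtain ⟨hij2, hp2, hq2⟩ := h2
  have hcop : Nat.Coprime p q := (Nat.coprime_primes hp hq).2 hpq
  have hcop2 : Nat.Coprime (p * q) (p * q) → True := fun _ => trivial
  have d1 : p * q ∣ i2 - i1 := by
    apply Nat.Coprime.mul_dvd_of_dvd_of_dvd hcop
    · exact Nat.dvd_sub hp2 hp1
    · have : j1 - j2 = i2 - i1 := by omega
      rw [← this]; exact Nat.dvd_sub hq1 hq2
  have d2 : p * q ∣ i1 - i2 := by
    apply Nat.Coprime.mul_dvd_of_dvd_of_dvd hcop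
    · exact Nat.dvd_sub hp1 hp2
    · have : j2 - j1 = i1 - i2 := by omega
      rw [← this]; exact Nat.dvd_sub hq2 hq1
  have e1 : i2 - i1 = 0 := by
    by_contra h
    have := Nat.le_of_dvd (Nat.pos_of_ne_zero h) d1
    omega
  have e2 : i1 - i2 = 0 := by
    by_contra h
    have := Nat.le_of_dvd (Nat.pos_of_ne_zero h) d2
    omega
  have : i1 = i2 := by omega
  subst this
  have : j1 = j2 := by omega
  subst this
  rfl

lemma totient_pq {p q : ℕ} (hp : p.Prime) (hq : q.Prime) (hpq : p ≠ q) :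
    (p * q).totient = (p - 1) * (q - 1) := by
  rw [Nat.totient_mul ((Nat.coprime_primes hp hq).2 hpq), Nat.totient_prime hp, Nat.totient_prime hq]

/-- Flatness of Φ_{pq}. -/
lemma cyclotomic_pq_flat {p q : ℕ} (hp : p.Prime) (hq : q.Prime) (hpq : p ≠ q) (n : ℕ) :
    |(cyclotomic (p * q) ℤ).coeff n| ≤ 1 := by
  by_cases hdeg : (p * q).totient < n
  · rw [Polynomial.coeff_eq_zero_of_natDegree_lt]
    · norm_num
    · rwa [natDegree_cyclotomic]
  · push_neg at hdeg
    have hpq2 : 1 < p * q := by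
      have := hp.two_le; have := hq.two_le; nlinarith
    have hn : n < p * q := lt_of_le_of_lt hdeg (Nat.totient_lt _ hpq2)
    have hcoe : (cyclotomic (p * q) ℤ).coeff n =
        PowerSeries.coeff n ((cyclotomic (p * q) ℤ : ℤ[X]) : PowerSeries ℤ) := by
      rw [Polynomial.coeff_coe]
    rw [hcoe, cyclotomic_coe hp hq hpq]
    set H := Gser p * Gser q with hH
    have expand1 : ((PowerSeries.X : PowerSeries ℤ) ^ (p * q) - 1) * (PowerSeries.X - 1) * H =
        PowerSeries.X ^ (p * q) * (PowerSeries.X * H) - PowerSeries.X ^ (p * q) * H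
          - PowerSeries.X * H + H := by ring
    rw [expand1]
    simp only [map_add, map_sub]
    have c1 : PowerSeries.coeff n (PowerSeries.X ^ (p * q) * (PowerSeries.X * H)) = 0 := by
      rw [PowerSeries.coeff_X_pow_mul', if_neg (by omega)]
    have c2 : PowerSeries.coeff n (PowerSeries.X ^ (p * q) * H) = 0 := by
      rw [PowerSeries.coeff_X_pow_mul', if_neg (by omega)]
    have c3 : PowerSeries.coeff n (PowerSeries.X * H) =
        if 1 ≤ n then PowerSeries.coeff (n - 1) H else 0 := by
      rw [← pow_one (PowerSeries.X : PowerSeries ℤ), PowerSeries.coeff_X_pow_mul']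
    rw [c1, c2, c3]
    have b1 := Gmul_coeff_nonneg p q n
    have b2 := Gmul_coeff_le_one hp hq hpq hn
    by_cases h1 : 1 ≤ n
    · rw [if_pos h1]
      have b3 := Gmul_coeff_nonneg p q (n - 1)
      have b4 := Gmul_coeff_le_one hp hq hpq (show n - 1 < p * q by omega)
      rw [← hH] at *
      rw [abs_le]; constructor <;> linarith
    · rw [if_neg h1]
      rw [← hH] at *
      rw [abs_le]; constructor <;> linarith

/-- Flatness of Ψ_{pq}. -/
lemma Psi_pq_flat {p q : ℕ} (hp : p.Prime) (hq : q.Prime) (hpq : p ≠ q) (n : ℕ) :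
    |(Psi (p * q)).coeff n| ≤ 1 := by
  rw [Psi_pq hp hq hpq]
  have hS : ∀ m : ℕ, (∑ i ∈ Finset.range q, (X : ℤ[X]) ^ i).coeff m =
      if m < q then 1 else 0 := by
    intro m
    rw [Polynomial.finset_sum_coeff]
    simp only [Polynomial.coeff_X_pow]
    rw [Finset.sum_ite_eq (Finset.range q) m (fun _ => (1 : ℤ))]
    simp [Finset.mem_range]
  have expand1 : ((X : ℤ[X]) ^ p - 1) * ∑ i ∈ Finset.range q, (X : ℤ[X]) ^ i =
      (∑ i ∈ Finset.range q, (X : ℤ[X]) ^ i) * X ^ p - ∑ i ∈ Finset.range q, (X : ℤ[X]) ^ i := by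
    ring
  rw [expand1, Polynomial.coeff_sub, Polynomial.coeff_mul_X_pow', hS]
  split_ifs with h1 <;> rw [hS] <;> split_ifs <;> norm_num

theorem psi_three_primes_flat (p q r : ℕ) (hp : p.Prime) (hq : q.Prime) (hr : r.Prime)
    (hpq : p < q) (hqr : q < r) (hbig : r > (p - 1) * (q - 1)) (k : ℕ) :
    |(Psi (p * q * r)).coeff k| ≤ 1 := by
  have hpq' : p ≠ q := hpq.ne
  have hrp : r ≠ p := (lt_trans hpq hqr).ne'
  have hrq : r ≠ q := hqr.ne'
  rw [Psi_pqr hp hq hr hrp hrq, Polynomial.coeff_mul]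
  have hdegΦ : (cyclotomic (p * q) ℤ).natDegree = (p - 1) * (q - 1) := by
    rw [natDegree_cyclotomic, totient_pq hp hq hpq']
  have hΦzero : ∀ i, r ≤ i → (cyclotomic (p * q) ℤ).coeff i = 0 := by
    intro i hi
    apply Polynomial.coeff_eq_zero_of_natDegree_lt
    rw [hdegΦ]; omega
  have hexp : ∀ j, (expand ℤ r (Psi (p * q))).coeff j =
      if r ∣ j then (Psi (p * q)).coeff (j / r) else 0 :=
    Polynomial.coeff_expand hr.pos _
  have hmem : (k % r, k - k % r) ∈ Finset.HasAntidiagonal.antidiagonal k := by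
    rw [Finset.HasAntidiagonal.mem_antidiagonal]
    exact Nat.add_sub_cancel' (Nat.mod_le k r)
  rw [Finset.sum_eq_single_of_mem (k % r, k - k % r) hmem]
  · rw [abs_mul]
    calc |(cyclotomic (p * q) ℤ).coeff (k % r)| *
          |(expand ℤ r (Psi (p * q))).coeff (k - k % r)|
        ≤ 1 * 1 := by
          apply mul_le_mul (cyclotomic_pq_flat hp hq hpq' _) ?_ (abs_nonneg _) (by norm_num)
          rw [hexp]
          split_ifs
          · exact Psi_pq_flat hp hq hpq' _
          · norm_num
      _ = 1 := by norm_num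
  · rintro ⟨i, j⟩ hij hne
    rw [Finset.HasAntidiagonal.mem_antidiagonal] at hij
    by_cases hdvd : r ∣ j
    · by_cases hir : i < r
      · exfalso
        apply hne
        obtain ⟨m, hm⟩ := hdvd
        have hi : i = k % r := by
          have : k = i + r * m := by omega
          rw [this, Nat.add_mul_mod_self_left, Nat.mod_eq_of_lt hir]
        simp only [Prod.mk.injEq]
        constructor
        · exact hi
        · omega
      · rw [hΦzero i (by omega), zero_mul]
    · rw [hexp, if_neg hdvd, mul_zero]
end
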